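/- Let A ∈ ℝ^{M×N} be a nonzero matrix and consider the column sampling model with c samples and the optimal sampling probability p_j = |A^{(j)}|² / ‖A‖_F² (assuming every column of A is nonzero so that p_j > 0). Then E[‖A·Aᵀ − C·Cᵀ‖_F²] = (1/c)(‖A‖_F⁴ − ‖A·Aᵀ‖_F²). -/

import Mathlib

open Finset Matrix

/-- The column-sampled matrix `C ∈ ℝ^{M×c}`: its `t`-th column is
`A^{(ω t)} / √(c * p (ω t))`. -/
noncomputable def sampledC {M N : ℕ} (A : Matrix (Fin M) (Fin N) ℝ) (c : ℕ)
    (p : Fin N → ℝ) (ω : Fin c → Fin N) : Matrix (Fin M) (Fin c) ℝ :=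
  fun i t => A i (ω t) / Real.sqrt (c * p (ω t))

/-- Squared Frobenius norm of a matrix. -/
def frobSq {m n : ℕ} (B : Matrix (Fin m) (Fin n) ℝ) : ℝ :=
  ∑ i, ∑ j, (B i j) ^ 2

/-- Squared Euclidean norm of the `j`-th column of `A`. -/
def colNormSq {M N : ℕ} (A : Matrix (Fin M) (Fin N) ℝ) (j : Fin N) : ℝ :=
  ∑ i, (A i j) ^ 2

/-- With the optimal sampling probability `p_j = |A^{(j)}|² / ‖A‖_F²` (all
columns of the nonzero matrix `A` being nonzero), the expected squared
Frobenius error is exactly `(1/c)(‖A‖_F⁴ − ‖A Aᵀ‖_F²)`. -/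

lemma sum_prod_pi {N c : ℕ} (F : Fin c → Fin N → ℝ) :
    ∑ ω : Fin c → Fin N, ∏ t, F t (ω t) = ∏ t, ∑ j, F t j := by
  rw [Finset.prod_univ_sum, Fintype.piFinset_univ]

lemma Esum {N c : ℕ} (p : Fin N → ℝ) (g : Fin c → Fin N → ℝ) :
    ∑ ω : Fin c → Fin N, (∏ t, p (ω t)) * ∏ t, g t (ω t)
      = ∏ t, ∑ j, p j * g t j := by
  rw [← sum_prod_pi (fun t j => p j * g t j)]
  exact Finset.sum_congr rfl fun ω _ => (Finset.prod_mul_distrib).symm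

lemma Esum_one {N c : ℕ} (p : Fin N → ℝ) (hps : ∑ j, p j = 1) :
    ∑ ω : Fin c → Fin N, (∏ t, p (ω t)) = 1 := by
  have h := Esum (c := c) p (fun _ _ => (1:ℝ))
  simpa [hps] using h

lemma Esum_single {N c : ℕ} (p f : Fin N → ℝ) (hps : ∑ j, p j = 1) (t₀ : Fin c) :
    ∑ ω : Fin c → Fin N, (∏ t, p (ω t)) * f (ω t₀) = ∑ j, p j * f j := by
  have h := Esum p (fun t j => if t = t₀ then f j else 1)
  have h1 : ∀ ω : Fin c → Fin N, (∏ t, if t = t₀ then f (ω t) else 1) = f (ω t₀) := by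
    intro ω; simp [Finset.prod_ite_eq']
  have h2 : ∀ t : Fin c, (∑ j, p j * if t = t₀ then f j else 1)
      = if t = t₀ then ∑ j, p j * f j else 1 := by
    intro t; by_cases ht : t = t₀ <;> simp [ht, hps]
  simp only [h1, h2] at h
  rw [h, Finset.prod_ite_eq' univ t₀ (fun _ => ∑ j, p j * f j)]
  simp

lemma Esum_pair {N c : ℕ} (p f : Fin N → ℝ) (hps : ∑ j, p j = 1)
    {t₀ t₁ : Fin c} (hne : t₀ ≠ t₁) :
    ∑ ω : Fin c → Fin N, (∏ t, p (ω t)) * (f (ω t₀) * f (ω t₁))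
      = (∑ j, p j * f j) ^ 2 := by
  have h := Esum p (fun t j => (if t = t₀ then f j else 1) * (if t = t₁ then f j else 1))
  have h1 : ∀ ω : Fin c → Fin N,
      (∏ t, (if t = t₀ then f (ω t) else 1) * (if t = t₁ then f (ω t) else 1))
        = f (ω t₀) * f (ω t₁) := by
    intro ω
    rw [Finset.prod_mul_distrib]
    simp [Finset.prod_ite_eq']
  have h2 : ∀ t : Fin c,
      (∑ j, p j * ((if t = t₀ then f j else 1) * (if t = t₁ then f j else 1)))
        = if t = t₀ then ∑ j, p j * f j else (if t = t₁ then ∑ j, p j * f j else 1) := by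
    intro t
    by_cases h0 : t = t₀
    · subst h0
      simp [if_neg hne, hps]
    · by_cases h1' : t = t₁
      · subst h1'
        simp [h0, hps]
      · simp [h0, h1', hps]
  simp only [h1, h2] at h
  rw [h]
  have h3 : (∏ t : Fin c, if t = t₀ then (∑ j, p j * f j)
      else if t = t₁ then (∑ j, p j * f j) else 1)
      = (∑ j, p j * f j) * (∑ j, p j * f j) := by
    rw [← Finset.prod_subset (Finset.subset_univ ({t₀, t₁} : Finset (Fin c)))
      (by intro x _ hx
          simp only [Finset.mem_insert, Finset.mem_singleton, not_or] at hx
          simp [hx.1, hx.2])]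
    rw [Finset.prod_pair hne]
    simp [Ne.symm hne]
  rw [h3, sq]

lemma Esum_sq {N c : ℕ} (p f : Fin N → ℝ) (hps : ∑ j, p j = 1) (t₀ : Fin c) :
    ∑ ω : Fin c → Fin N, (∏ t, p (ω t)) * (f (ω t₀) * f (ω t₀))
      = ∑ j, p j * (f j * f j) :=
  Esum_single p (fun j => f j * f j) hps t₀

lemma entry_var {N c : ℕ} (p f : Fin N → ℝ) (hps : ∑ j, p j = 1) (b : ℝ) :
    ∑ ω : Fin c → Fin N, (∏ t, p (ω t)) * (b - ∑ t, f (ω t))^2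
      = b^2 - 2*b*((c:ℝ) * ∑ j, p j * f j)
        + ((c:ℝ) * ∑ j, p j * (f j * f j)
            + ((c:ℝ)^2 - (c:ℝ)) * (∑ j, p j * f j)^2) := by
  have expand : ∀ ω : Fin c → Fin N,
      (∏ t, p (ω t)) * (b - ∑ t, f (ω t))^2
        = (∏ t, p (ω t)) * b^2
          - 2*b*(∑ t, (∏ s, p (ω s)) * f (ω t))
          + ∑ t, ∑ t', (∏ s, p (ω s)) * (f (ω t) * f (ω t')) := by
    intro ω
    rw [← Finset.mul_sum]
    have : (∑ t, ∑ t', (∏ s, p (ω s)) * (f (ω t) * f (ω t')))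
        = (∏ s, p (ω s)) * ((∑ t, f (ω t)) * (∑ t', f (ω t'))) := by
      rw [Finset.sum_mul_sum, Finset.mul_sum]
      exact Finset.sum_congr rfl fun t _ => by rw [Finset.mul_sum]
    rw [this]; ring
  simp_rw [expand]
  rw [Finset.sum_add_distrib, Finset.sum_sub_distrib]
  rw [← Finset.sum_mul, Esum_one p hps]
  rw [← Finset.mul_sum]
  rw [Finset.sum_comm]
  have hsingle : ∀ t : Fin c, ∑ ω : Fin c → Fin N, (∏ s, p (ω s)) * f (ω t)
      = ∑ j, p j * f j := fun t => Esum_single p f hps t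
  -- middle term
  have hmid : (∑ t : Fin c, ∑ ω : Fin c → Fin N, (∏ s, p (ω s)) * f (ω t))
      = (c:ℝ) * ∑ j, p j * f j := by
    simp [hsingle, Finset.sum_const, Finset.card_univ, nsmul_eq_mul]
  -- last term
  have hlast : (∑ ω : Fin c → Fin N, ∑ t : Fin c, ∑ t' : Fin c,
        (∏ s, p (ω s)) * (f (ω t) * f (ω t')))
      = (c:ℝ) * ∑ j, p j * (f j * f j)
        + ((c:ℝ)^2 - (c:ℝ)) * (∑ j, p j * f j)^2 := by
    rw [Finset.sum_comm]
    have : ∀ t : Fin c, (∑ ω : Fin c → Fin N, ∑ t' : Fin c,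
          (∏ s, p (ω s)) * (f (ω t) * f (ω t')))
        = ∑ t' : Fin c, ∑ ω : Fin c → Fin N, (∏ s, p (ω s)) * (f (ω t) * f (ω t')) :=
      fun t => Finset.sum_comm
    simp_rw [this]
    have key : ∀ t t' : Fin c, (∑ ω : Fin c → Fin N, (∏ s, p (ω s)) * (f (ω t) * f (ω t')))
        = if t = t' then ∑ j, p j * (f j * f j) else (∑ j, p j * f j)^2 := by
      intro t t'
      by_cases h : t = t'
      · subst h; simp [Esum_sq p f hps t]
      · simp [h, Esum_pair p f hps h]
    simp_rw [key]
    have hrow : ∀ t : Fin c, (∑ t' : Fin c, if t = t' then ∑ j, p j * (f j * f j)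
          else (∑ j, p j * f j)^2)
        = (c:ℝ) * (∑ j, p j * f j)^2 + ((∑ j, p j * (f j * f j)) - (∑ j, p j * f j)^2) := by
      intro t
      have hsplit : ∀ t' : Fin c, (if t = t' then ∑ j, p j * (f j * f j)
            else (∑ j, p j * f j)^2)
          = (∑ j, p j * f j)^2
            + (if t = t' then (∑ j, p j * (f j * f j)) - (∑ j, p j * f j)^2 else 0) := by
        intro t'; split <;> ring
      simp_rw [hsplit]
      rw [Finset.sum_add_distrib, Finset.sum_ite_eq univ t, Finset.sum_const,
        Finset.card_univ]
      simp [nsmul_eq_mul]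
    simp_rw [hrow]
    rw [Finset.sum_const, Finset.card_univ]
    simp only [Fintype.card_fin, nsmul_eq_mul]
    ring
  rw [hmid, hlast]
  ring

theorem expectation_frobSq_error_optimal {M N : ℕ}
    (A : Matrix (Fin M) (Fin N) ℝ) (hA : A ≠ 0)
    (hcol : ∀ j, 0 < colNormSq A j)
    (c : ℕ) (hc : 1 ≤ c)
    (p : Fin N → ℝ) (hp : ∀ j, p j = colNormSq A j / frobSq A) :
    ∑ ω : Fin c → Fin N, (∏ t, p (ω t)) *
        frobSq (A * Aᵀ - (sampledC A c p ω) * (sampledC A c p ω)ᵀ)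
      = (1 / c) * ((frobSq A) ^ 2 - frobSq (A * Aᵀ)) := by
  classical
  have hcR : (0:ℝ) < (c:ℝ) := by exact_mod_cast hc
  have hcne : (c:ℝ) ≠ 0 := ne_of_gt hcR
  -- frobSq A > 0
  have hF : 0 < frobSq A := by
    obtain ⟨i, j, hij⟩ : ∃ i j, A i j ≠ 0 := by
      by_contra h
      push_neg at h
      exact hA (by ext i j; simpa using h i j)
    have h1 : 0 < (A i j)^2 := by positivity
    have h2 : (A i j)^2 ≤ colNormSq A j := by
      exact Finset.single_le_sum (fun i' _ => sq_nonneg (A i' j)) (Finset.mem_univ i)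
    have h3 : colNormSq A j ≤ ∑ j', colNormSq A j' :=
      Finset.single_le_sum (fun j' _ => le_of_lt (hcol j')) (Finset.mem_univ j)
    have h4 : (∑ j', colNormSq A j') = frobSq A := by
      unfold colNormSq frobSq; rw [Finset.sum_comm]
    linarith
  have hFne : frobSq A ≠ 0 := ne_of_gt hF
  have hp0 : ∀ j, 0 < p j := fun j => by
    rw [hp j]; exact div_pos (hcol j) hF
  have hpne : ∀ j, p j ≠ 0 := fun j => ne_of_gt (hp0 j)
  have hps : ∑ j, p j = 1 := by
    simp only [hp]
    rw [← Finset.sum_div]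
    rw [show (∑ j, colNormSq A j) = frobSq A by
      unfold colNormSq frobSq; rw [Finset.sum_comm]]
    exact div_self hFne
  set f : Fin M → Fin M → Fin N → ℝ :=
    fun i k j => A i j * A k j / (c * p j) with hf
  -- rewrite frobSq of the difference entrywise
  have hfrob : ∀ ω : Fin c → Fin N,
      frobSq (A * Aᵀ - (sampledC A c p ω) * (sampledC A c p ω)ᵀ)
        = ∑ i, ∑ k, ((A * Aᵀ) i k - ∑ t, f i k (ω t))^2 := by
    intro ω
    unfold frobSq
    refine Finset.sum_congr rfl fun i _ => Finset.sum_congr rfl fun k _ => ?_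
    congr 1
    rw [Matrix.sub_apply]
    congr 1
    rw [Matrix.mul_apply]
    refine Finset.sum_congr rfl fun t _ => ?_
    simp only [sampledC, Matrix.transpose_apply, hf]
    rw [div_mul_div_comm, Real.mul_self_sqrt (mul_nonneg (Nat.cast_nonneg c) (le_of_lt (hp0 _)))]
  simp_rw [hfrob]
  -- exchange sums
  have hswap : ∑ ω : Fin c → Fin N, (∏ t, p (ω t)) *
        ∑ i, ∑ k, ((A * Aᵀ) i k - ∑ t, f i k (ω t))^2
      = ∑ i, ∑ k, ∑ ω : Fin c → Fin N,
          (∏ t, p (ω t)) * ((A * Aᵀ) i k - ∑ t, f i k (ω t))^2 := by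
    simp_rw [Finset.mul_sum]
    rw [Finset.sum_comm]
    exact Finset.sum_congr rfl fun i _ => Finset.sum_comm
  rw [hswap]
  -- per-entry expectation via entry_var
  have hμ : ∀ i k, (∑ j, p j * f i k j) = (A * Aᵀ) i k / c := by
    intro i k
    rw [Matrix.mul_apply, Finset.sum_div]
    refine Finset.sum_congr rfl fun j _ => ?_
    simp only [hf, Matrix.transpose_apply]
    rw [eq_div_iff hcne]
    field_simp [hpne j]
  have hσ : ∀ i k, (∑ j, p j * (f i k j * f i k j))
      = (1/(c:ℝ)^2) * ∑ j, (A i j * A k j)^2 / p j := by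
    intro i k
    rw [Finset.mul_sum]
    refine Finset.sum_congr rfl fun j _ => ?_
    simp only [hf]
    field_simp [hpne j]
  have hentry : ∀ i k, ∑ ω : Fin c → Fin N,
        (∏ t, p (ω t)) * ((A * Aᵀ) i k - ∑ t, f i k (ω t))^2
      = (1/(c:ℝ)) * ((∑ j, (A i j * A k j)^2 / p j) - ((A * Aᵀ) i k)^2) := by
    intro i k
    rw [entry_var p (f i k) hps ((A * Aᵀ) i k), hμ i k, hσ i k]
    field_simp
    ring
  simp_rw [hentry]
  -- sum over entries
  have key1 : ∑ i, ∑ k, ∑ j, (A i j * A k j)^2 / p j = (frobSq A)^2 := by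
    have swap1 : (∑ i, ∑ k, ∑ j, (A i j * A k j)^2 / p j)
        = ∑ j, ∑ i, ∑ k, (A i j * A k j)^2 / p j := by
      calc (∑ i, ∑ k, ∑ j, (A i j * A k j)^2 / p j)
          = ∑ i, ∑ j, ∑ k, (A i j * A k j)^2 / p j :=
            Finset.sum_congr rfl (fun i _ => Finset.sum_comm)
        _ = ∑ j, ∑ i, ∑ k, (A i j * A k j)^2 / p j := Finset.sum_comm
    rw [swap1]
    have e1 : ∀ j : Fin N, (∑ i, ∑ k, (A i j * A k j)^2 / p j)
        = colNormSq A j * frobSq A := by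
      intro j
      simp_rw [mul_pow, ← Finset.sum_div]
      rw [← Finset.sum_mul_sum]
      rw [hp j]
      rw [show (∑ i, (A i j)^2) = colNormSq A j from rfl]
      field_simp [ne_of_gt (hcol j)]
    simp_rw [e1]
    rw [← Finset.sum_mul]
    rw [show (∑ j, colNormSq A j) = frobSq A by
      unfold colNormSq frobSq; rw [Finset.sum_comm]]
    ring
  have key2 : ∑ i, ∑ k, ((A * Aᵀ) i k)^2 = frobSq (A * Aᵀ) := rfl
  calc ∑ i, ∑ k, (1/(c:ℝ)) * ((∑ j, (A i j * A k j)^2 / p j) - ((A * Aᵀ) i k)^2)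
      = (1/(c:ℝ)) * ∑ i, ∑ k, ((∑ j, (A i j * A k j)^2 / p j) - ((A * Aᵀ) i k)^2) := by
        rw [Finset.mul_sum]
        exact Finset.sum_congr rfl fun i _ => (Finset.mul_sum _ _ _).symm
    _ = (1/(c:ℝ)) * ((∑ i, ∑ k, ∑ j, (A i j * A k j)^2 / p j)
          - ∑ i, ∑ k, ((A * Aᵀ) i k)^2) := by
        congr 1
        rw [← Finset.sum_sub_distrib]
        exact Finset.sum_congr rfl fun i _ => Finset.sum_sub_distrib _ _
    _ = (1/(c:ℝ)) * ((frobSq A)^2 - frobSq (A * Aᵀ)) := by rw [key1, key2]
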